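/- Let W₁, W₂, W₃ : ℝ → ℝ be twice continuously differentiable and satisfy (W₂² − W₁²)' + W₂'' + W₁'' = 0 and (W₃² − W₂²)' + W₃'' + W₂'' = 0 identically on ℝ. Then the Hamiltonian H of the model commutes with the parasupercharge Q: for every three times continuously differentiable f = (f₃, f₂, f₁, f₀) : ℝ → ℝ⁴, Q(Hf) = H(Qf). -/

import Mathlib

/-- The parasupercharge `Q` of the p=3 model: it acts on 4-component functions
`f = (f₃, f₂, f₁, f₀)` (indexed so that `f 0 = f₃`, ..., `f 3 = f₀`) by
`Qf = (0, −f₃' + W₁f₃, −f₂' + W₂f₂, −f₁' + W₃f₁)`. -/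
noncomputable def Qop (W₁ W₂ W₃ : ℝ → ℝ) (f : Fin 4 → ℝ → ℝ) : Fin 4 → ℝ → ℝ :=
  ![0, -deriv (f 0) + W₁ * f 0, -deriv (f 1) + W₂ * f 1, -deriv (f 2) + W₃ * f 2]

/-- The diagonal potential terms `U₁, U₂, U₃, U₄` of the model Hamiltonian. -/
noncomputable def Uop (W₁ W₂ W₃ : ℝ → ℝ) : Fin 4 → ℝ → ℝ :=
  ![5 * deriv W₁ + 3 * deriv W₂ + deriv W₃,
    -deriv W₁ + 3 * deriv W₂ + deriv W₃,
    -deriv W₁ - 3 * deriv W₂ + deriv W₃,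
    -deriv W₁ - 3 * deriv W₂ - 5 * deriv W₃]

/-- The model Hamiltonian: `(Hf)ⱼ = −½fⱼ'' + (1/6)(W₁² + W₂² + W₃²)fⱼ + (1/6)Uⱼfⱼ`. -/
noncomputable def Hop (W₁ W₂ W₃ : ℝ → ℝ) (f : Fin 4 → ℝ → ℝ) : Fin 4 → ℝ → ℝ :=
  fun j => -(1 / 2 : ℝ → ℝ) * deriv (deriv (f j))
    + (1 / 6 : ℝ → ℝ) * (W₁ ^ 2 + W₂ ^ 2 + W₃ ^ 2) * f j
    + (1 / 6 : ℝ → ℝ) * Uop W₁ W₂ W₃ j * f j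

/-- Key pointwise computation: commutation of a 1-dim Schrödinger operator pair with a
first-order intertwiner. -/
lemma helper_key (W f P Q : ℝ → ℝ)
    (hW : Differentiable ℝ W) (hW2 : Differentiable ℝ (deriv W))
    (hf : Differentiable ℝ f) (hf1 : Differentiable ℝ (deriv f))
    (hf2 : Differentiable ℝ (deriv (deriv f)))
    (hP : Differentiable ℝ P)
    (hPQ : ∀ x, P x - Q x = deriv W x)
    (hP' : ∀ x, deriv P x = (1/2) * deriv (deriv W) x + W x * deriv W x) (x : ℝ) :
    -(deriv (fun y => -(1/2) * deriv (deriv f) y + P y * f y) x)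
      + W x * (-(1/2) * deriv (deriv f) x + P x * f x)
    = -(1/2) * deriv (deriv (fun y => -(deriv f y) + W y * f y)) x
      + Q x * (-(deriv f x) + W x * f x) := by
  have hg : deriv (fun y => -(deriv f y) + W y * f y)
      = fun y => -(deriv (deriv f) y) + (deriv W y * f y + W y * deriv f y) := by
    funext y
    exact (((hf1 y).hasDerivAt.neg).add (((hW y).hasDerivAt).mul ((hf y).hasDerivAt))).deriv
  have hg2 : deriv (deriv (fun y => -(deriv f y) + W y * f y)) x
      = -(deriv (deriv (deriv f)) x) + (deriv (deriv W) x * f x + deriv W x * deriv f x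
        + (deriv W x * deriv f x + W x * deriv (deriv f) x)) := by
    rw [hg]
    exact (((hf2 x).hasDerivAt.neg).add ((((hW2 x).hasDerivAt).mul ((hf x).hasDerivAt)).add
      (((hW x).hasDerivAt).mul ((hf1 x).hasDerivAt)))).deriv
  have hL : deriv (fun y => -(1/2) * deriv (deriv f) y + P y * f y) x
      = -(1/2) * deriv (deriv (deriv f)) x + (deriv P x * f x + P x * deriv f x) :=
    ((HasDerivAt.const_mul (-(1/2) : ℝ) (hf2 x).hasDerivAt).add
      (((hP x).hasDerivAt).mul ((hf x).hasDerivAt))).deriv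
  rw [hL, hg2]
  have e1 := hPQ x
  have e2 := hP' x
  linear_combination (-(f x)) * e2 + (W x * f x - deriv f x) * e1

/-- If the superpotentials are C² and satisfy
`(W₂² − W₁²)' + W₂'' + W₁'' = 0` and `(W₃² − W₂²)' + W₃'' + W₂'' = 0`, then for every C³
4-component function `f`, the Hamiltonian commutes with `Q`: `Q(Hf) = H(Qf)`. -/
theorem stmt15 (W₁ W₂ W₃ : ℝ → ℝ)
    (hW₁ : ContDiff ℝ 2 W₁) (hW₂ : ContDiff ℝ 2 W₂) (hW₃ : ContDiff ℝ 2 W₃)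
    (h1 : ∀ x, deriv (fun y => W₂ y ^ 2 - W₁ y ^ 2) x
      + deriv (deriv W₂) x + deriv (deriv W₁) x = 0)
    (h2 : ∀ x, deriv (fun y => W₃ y ^ 2 - W₂ y ^ 2) x
      + deriv (deriv W₃) x + deriv (deriv W₂) x = 0)
    (f : Fin 4 → ℝ → ℝ) (hf : ∀ i, ContDiff ℝ 3 (f i)) :
    Qop W₁ W₂ W₃ (Hop W₁ W₂ W₃ f) = Hop W₁ W₂ W₃ (Qop W₁ W₂ W₃ f) := by
  -- differentiability facts
  have cd1 : ∀ W : ℝ → ℝ, ContDiff ℝ 2 W → ContDiff ℝ 1 (deriv W) := by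
    intro W h
    have h' : ContDiff ℝ (1+1) W := by norm_num; exact h
    exact (contDiff_succ_iff_deriv.mp h').2.2
  have hW₁' : Differentiable ℝ W₁ := hW₁.differentiable (by norm_num)
  have hW₂' : Differentiable ℝ W₂ := hW₂.differentiable (by norm_num)
  have hW₃' : Differentiable ℝ W₃ := hW₃.differentiable (by norm_num)
  have hdW₁ : Differentiable ℝ (deriv W₁) := (cd1 _ hW₁).differentiable (by norm_num)
  have hdW₂ : Differentiable ℝ (deriv W₂) := (cd1 _ hW₂).differentiable (by norm_num)
  have hdW₃ : Differentiable ℝ (deriv W₃) := (cd1 _ hW₃).differentiable (by norm_num)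
  have hfd : ∀ i, Differentiable ℝ (f i) := fun i => (hf i).differentiable (by norm_num)
  have hfc2 : ∀ i, ContDiff ℝ 2 (deriv (f i)) := by
    intro i
    have h' : ContDiff ℝ (2+1) (f i) := by norm_num; exact hf i
    exact (contDiff_succ_iff_deriv.mp h').2.2
  have hfd1 : ∀ i, Differentiable ℝ (deriv (f i)) :=
    fun i => (hfc2 i).differentiable (by norm_num)
  have hfd2 : ∀ i, Differentiable ℝ (deriv (deriv (f i))) :=
    fun i => (cd1 _ (hfc2 i)).differentiable (by norm_num)
  -- rewrite the constraints pointwise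
  have hc1 : ∀ x, 2 * W₂ x * deriv W₂ x - 2 * W₁ x * deriv W₁ x
      + deriv (deriv W₂) x + deriv (deriv W₁) x = 0 := by
    intro x
    have hd := (((hW₂' x).hasDerivAt.pow 2).sub ((hW₁' x).hasDerivAt.pow 2)).deriv
    have := h1 x
    erw [hd] at this
    push_cast at this
    linarith [this]
  have hc2 : ∀ x, 2 * W₃ x * deriv W₃ x - 2 * W₂ x * deriv W₂ x
      + deriv (deriv W₃) x + deriv (deriv W₂) x = 0 := by
    intro x
    have hd := (((hW₃' x).hasDerivAt.pow 2).sub ((hW₂' x).hasDerivAt.pow 2)).deriv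
    have := h2 x
    erw [hd] at this
    push_cast at this
    linarith [this]
  -- the effective potentials
  set P₁ : ℝ → ℝ := fun y => (1/6) * (W₁ y ^ 2 + W₂ y ^ 2 + W₃ y ^ 2)
    + (1/6) * (5 * deriv W₁ y + 3 * deriv W₂ y + 1 * deriv W₃ y) with hP₁def
  set P₂ : ℝ → ℝ := fun y => (1/6) * (W₁ y ^ 2 + W₂ y ^ 2 + W₃ y ^ 2)
    + (1/6) * (-1 * deriv W₁ y + 3 * deriv W₂ y + 1 * deriv W₃ y) with hP₂def
  set P₃ : ℝ → ℝ := fun y => (1/6) * (W₁ y ^ 2 + W₂ y ^ 2 + W₃ y ^ 2)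
    + (1/6) * (-1 * deriv W₁ y + -3 * deriv W₂ y + 1 * deriv W₃ y) with hP₃def
  set P₄ : ℝ → ℝ := fun y => (1/6) * (W₁ y ^ 2 + W₂ y ^ 2 + W₃ y ^ 2)
    + (1/6) * (-1 * deriv W₁ y + -3 * deriv W₂ y + -5 * deriv W₃ y) with hP₄def
  have hPdiff : ∀ (a b c : ℝ), Differentiable ℝ (fun y =>
      (1/6) * (W₁ y ^ 2 + W₂ y ^ 2 + W₃ y ^ 2)
      + (1/6) * (a * deriv W₁ y + b * deriv W₂ y + c * deriv W₃ y)) := by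
    intro a b c
    fun_prop
  have hPderiv : ∀ (a b c : ℝ) (x : ℝ), deriv (fun y =>
      (1/6) * (W₁ y ^ 2 + W₂ y ^ 2 + W₃ y ^ 2)
      + (1/6) * (a * deriv W₁ y + b * deriv W₂ y + c * deriv W₃ y)) x
      = (1/6) * (2 * W₁ x * deriv W₁ x + 2 * W₂ x * deriv W₂ x + 2 * W₃ x * deriv W₃ x)
      + (1/6) * (a * deriv (deriv W₁) x + b * deriv (deriv W₂) x + c * deriv (deriv W₃) x) := by
    intro a b c x
    have h := ((HasDerivAt.const_mul ((1:ℝ)/6)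
        ((((hW₁' x).hasDerivAt.pow 2).add ((hW₂' x).hasDerivAt.pow 2)).add
          ((hW₃' x).hasDerivAt.pow 2))).add
      (HasDerivAt.const_mul ((1:ℝ)/6)
        (((HasDerivAt.const_mul a (hdW₁ x).hasDerivAt).add
          (HasDerivAt.const_mul b (hdW₂ x).hasDerivAt)).add
          (HasDerivAt.const_mul c (hdW₃ x).hasDerivAt)))).deriv
    erw [h]
    push_cast
    ring
  -- component functions of H f in convenient form
  have hHcomp : ∀ (j : Fin 4) (P : ℝ → ℝ), (Uop W₁ W₂ W₃ j
      = fun y => 6 * P y - (W₁ y ^ 2 + W₂ y ^ 2 + W₃ y ^ 2)) →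
      Hop W₁ W₂ W₃ f j = fun y => -(1/2) * deriv (deriv (f j)) y + P y * f j y := by
    intro j P hU
    funext y
    have : Uop W₁ W₂ W₃ j y = 6 * P y - (W₁ y ^ 2 + W₂ y ^ 2 + W₃ y ^ 2) := by rw [hU]
    simp only [Hop, Pi.add_apply, Pi.mul_apply, Pi.neg_apply, Pi.div_apply, Pi.one_apply,
      Pi.ofNat_apply, Pi.pow_apply, this]
    ring
  have hU0 : Uop W₁ W₂ W₃ 0 = fun y => 6 * P₁ y - (W₁ y ^ 2 + W₂ y ^ 2 + W₃ y ^ 2) := by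
    funext y
    simp only [Uop, hP₁def, Matrix.cons_val_zero, Pi.add_apply, Pi.mul_apply, Pi.ofNat_apply]
    ring
  have hU1 : Uop W₁ W₂ W₃ 1 = fun y => 6 * P₂ y - (W₁ y ^ 2 + W₂ y ^ 2 + W₃ y ^ 2) := by
    funext y
    simp only [Uop, hP₂def, Matrix.cons_val_one, Matrix.head_cons, Matrix.cons_val_zero, Pi.add_apply, Pi.sub_apply,
      Pi.mul_apply, Pi.neg_apply, Pi.ofNat_apply]
    ring
  have hU2 : Uop W₁ W₂ W₃ 2 = fun y => 6 * P₃ y - (W₁ y ^ 2 + W₂ y ^ 2 + W₃ y ^ 2) := by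
    funext y
    simp only [Uop, hP₃def, Matrix.cons_val_two, Matrix.tail_cons, Matrix.head_cons,
      Pi.add_apply, Pi.sub_apply, Pi.mul_apply, Pi.neg_apply, Pi.ofNat_apply]
    ring
  have hU3 : Uop W₁ W₂ W₃ 3 = fun y => 6 * P₄ y - (W₁ y ^ 2 + W₂ y ^ 2 + W₃ y ^ 2) := by
    funext y
    simp only [Uop, hP₄def, Matrix.cons_val_three, Matrix.tail_cons, Matrix.head_cons,
      Pi.add_apply, Pi.sub_apply, Pi.mul_apply, Pi.neg_apply, Pi.ofNat_apply]
    ring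
  have hH0 := hHcomp 0 P₁ hU0
  have hH1 := hHcomp 1 P₂ hU1
  have hH2 := hHcomp 2 P₃ hU2
  have hH3 := hHcomp 3 P₄ hU3
  -- derivative conditions on potentials
  have hP₁' : ∀ x, deriv P₁ x = (1/2) * deriv (deriv W₁) x + W₁ x * deriv W₁ x := by
    intro x
    rw [hP₁def, hPderiv 5 3 1]
    · linear_combination (1/3) * hc1 x + (1/6) * hc2 x
  have hP₂' : ∀ x, deriv P₂ x = (1/2) * deriv (deriv W₂) x + W₂ x * deriv W₂ x := by
    intro x
    rw [hP₂def, hPderiv (-1) 3 1]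
    · linear_combination (1/6) * hc2 x - (1/6) * hc1 x
  have hP₃' : ∀ x, deriv P₃ x = (1/2) * deriv (deriv W₃) x + W₃ x * deriv W₃ x := by
    intro x
    rw [hP₃def, hPderiv (-1) (-3) 1]
    · linear_combination (-(1/6)) * hc1 x - (1/3) * hc2 x
  funext j
  fin_cases j
  · -- component 0
    show Qop W₁ W₂ W₃ (Hop W₁ W₂ W₃ f) 0 = Hop W₁ W₂ W₃ (Qop W₁ W₂ W₃ f) 0
    have hQ0 : Qop W₁ W₂ W₃ (Hop W₁ W₂ W₃ f) 0 = 0 := by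
      simp [Qop]
    have hQ0' : Qop W₁ W₂ W₃ f 0 = 0 := by simp [Qop]
    rw [hQ0]
    show (0 : ℝ → ℝ) = Hop W₁ W₂ W₃ (Qop W₁ W₂ W₃ f) 0
    have hz : deriv (0 : ℝ → ℝ) = 0 := by
      rw [show (0:ℝ→ℝ) = (fun _ : ℝ => (0:ℝ)) from rfl, deriv_const']
    funext y
    simp [Hop, hQ0', hz]
  · -- component 1
    show Qop W₁ W₂ W₃ (Hop W₁ W₂ W₃ f) 1 = Hop W₁ W₂ W₃ (Qop W₁ W₂ W₃ f) 1
    have hQg : Qop W₁ W₂ W₃ f 1 = fun y => -(deriv (f 0) y) + W₁ y * f 0 y := by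
      funext y
      simp [Qop]
    have hRH : Hop W₁ W₂ W₃ (Qop W₁ W₂ W₃ f) 1
        = fun y => -(1/2) * deriv (deriv (fun z => -(deriv (f 0) z) + W₁ z * f 0 z)) y
          + P₂ y * (-(deriv (f 0) y) + W₁ y * f 0 y) := by
      have := hHcomp 1 P₂ hU1 -- wrong f; redo directly
      funext y
      have hUv : Uop W₁ W₂ W₃ 1 y = 6 * P₂ y - (W₁ y ^ 2 + W₂ y ^ 2 + W₃ y ^ 2) := by
        rw [hU1]
      simp only [Hop, Pi.add_apply, Pi.mul_apply, Pi.neg_apply, Pi.div_apply, Pi.one_apply,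
        Pi.ofNat_apply, Pi.pow_apply, hUv, hQg]
      ring
    have hLH : Qop W₁ W₂ W₃ (Hop W₁ W₂ W₃ f) 1
        = fun x => -(deriv (fun y => -(1/2) * deriv (deriv (f 0)) y + P₁ y * f 0 y) x)
          + W₁ x * (-(1/2) * deriv (deriv (f 0)) x + P₁ x * f 0 x) := by
      funext x
      simp only [Qop, Matrix.cons_val_one, Matrix.head_cons, Matrix.cons_val_zero, Pi.add_apply, Pi.neg_apply,
        Pi.mul_apply, hH0]
    rw [hLH, hRH]
    funext x
    exact helper_key W₁ (f 0) P₁ P₂ hW₁' hdW₁ (hfd 0) (hfd1 0) (hfd2 0)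
      (by rw [hP₁def]; exact hPdiff 5 3 1) (fun y => by rw [hP₁def, hP₂def]; ring) hP₁' x
  · -- component 2
    show Qop W₁ W₂ W₃ (Hop W₁ W₂ W₃ f) 2 = Hop W₁ W₂ W₃ (Qop W₁ W₂ W₃ f) 2
    have hQg : Qop W₁ W₂ W₃ f 2 = fun y => -(deriv (f 1) y) + W₂ y * f 1 y := by
      funext y
      simp [Qop]
    have hRH : Hop W₁ W₂ W₃ (Qop W₁ W₂ W₃ f) 2
        = fun y => -(1/2) * deriv (deriv (fun z => -(deriv (f 1) z) + W₂ z * f 1 z)) y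
          + P₃ y * (-(deriv (f 1) y) + W₂ y * f 1 y) := by
      funext y
      have hUv : Uop W₁ W₂ W₃ 2 y = 6 * P₃ y - (W₁ y ^ 2 + W₂ y ^ 2 + W₃ y ^ 2) := by
        rw [hU2]
      simp only [Hop, Pi.add_apply, Pi.mul_apply, Pi.neg_apply, Pi.div_apply, Pi.one_apply,
        Pi.ofNat_apply, Pi.pow_apply, hUv, hQg]
      ring
    have hLH : Qop W₁ W₂ W₃ (Hop W₁ W₂ W₃ f) 2
        = fun x => -(deriv (fun y => -(1/2) * deriv (deriv (f 1)) y + P₂ y * f 1 y) x)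
          + W₂ x * (-(1/2) * deriv (deriv (f 1)) x + P₂ x * f 1 x) := by
      funext x
      simp only [Qop, Matrix.cons_val_two, Matrix.tail_cons, Matrix.head_cons, Pi.add_apply,
        Pi.neg_apply, Pi.mul_apply, hH1]
    rw [hLH, hRH]
    funext x
    exact helper_key W₂ (f 1) P₂ P₃ hW₂' hdW₂ (hfd 1) (hfd1 1) (hfd2 1)
      (by rw [hP₂def]; exact hPdiff (-1) 3 1) (fun y => by rw [hP₂def, hP₃def]; ring) hP₂' x
  · -- component 3
    show Qop W₁ W₂ W₃ (Hop W₁ W₂ W₃ f) 3 = Hop W₁ W₂ W₃ (Qop W₁ W₂ W₃ f) 3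
    have hQg : Qop W₁ W₂ W₃ f 3 = fun y => -(deriv (f 2) y) + W₃ y * f 2 y := by
      funext y
      simp [Qop]
    have hRH : Hop W₁ W₂ W₃ (Qop W₁ W₂ W₃ f) 3
        = fun y => -(1/2) * deriv (deriv (fun z => -(deriv (f 2) z) + W₃ z * f 2 z)) y
          + P₄ y * (-(deriv (f 2) y) + W₃ y * f 2 y) := by
      funext y
      have hUv : Uop W₁ W₂ W₃ 3 y = 6 * P₄ y - (W₁ y ^ 2 + W₂ y ^ 2 + W₃ y ^ 2) := by
        rw [hU3]
      simp only [Hop, Pi.add_apply, Pi.mul_apply, Pi.neg_apply, Pi.div_apply, Pi.one_apply,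
        Pi.ofNat_apply, Pi.pow_apply, hUv, hQg]
      ring
    have hLH : Qop W₁ W₂ W₃ (Hop W₁ W₂ W₃ f) 3
        = fun x => -(deriv (fun y => -(1/2) * deriv (deriv (f 2)) y + P₃ y * f 2 y) x)
          + W₃ x * (-(1/2) * deriv (deriv (f 2)) x + P₃ x * f 2 x) := by
      funext x
      simp only [Qop, Matrix.cons_val_three, Matrix.tail_cons, Matrix.head_cons, Pi.add_apply,
        Pi.neg_apply, Pi.mul_apply, hH2]
    rw [hLH, hRH]
    funext x
    exact helper_key W₃ (f 2) P₃ P₄ hW₃' hdW₃ (hfd 2) (hfd1 2) (hfd2 2)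
      (by rw [hP₃def]; exact hPdiff (-1) (-3) 1) (fun y => by rw [hP₃def, hP₄def]; ring) hP₃' x
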